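/- Let x = (x_n) and y = (y_n) be elements of real ℓ∞. If there exist N, M ∈ ℕ with |x_N| = ‖x‖ = |x_M| and x_N y_N ≥ 0 ≥ x_M y_M, then x ⊥_B y. -/

import Mathlib

open ENNReal

lemma abs_add_mul_ge (a b t : ℝ) (hab : a * b ≥ 0) (ht : 0 ≤ t) :
    |a| ≤ |a + t * b| := by
  nlinarith [sq_abs a, sq_abs (a + t * b), abs_nonneg a, abs_nonneg (a + t * b),
    mul_nonneg ht hab, sq_nonneg (t * b)]

theorem ellInfty_real_orth_of_two_norming_indices
    (x y : lp (fun _ : ℕ => ℝ) ∞) (N M : ℕ)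
    (hN : |x N| = ‖x‖) (hM : |x M| = ‖x‖)
    (hsign : x N * y N ≥ 0 ∧ 0 ≥ x M * y M) :
    ∀ lam : ℝ, ‖x‖ ≤ ‖x + lam • y‖ := by
  intro lam
  rcases le_or_gt 0 lam with h | h
  · calc ‖x‖ = |x N| := hN.symm
      _ ≤ |x N + lam * y N| := abs_add_mul_ge _ _ _ hsign.1 h
      _ = ‖(x + lam • y) N‖ := by
          simp [lp.coeFn_add, lp.coeFn_smul, Real.norm_eq_abs]
          rfl
      _ ≤ ‖x + lam • y‖ := lp.norm_apply_le_norm (by norm_num) _ N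
  · calc ‖x‖ = |x M| := hM.symm
      _ ≤ |x M + lam * y M| := by
          have := abs_add_mul_ge (x M) (-(y M)) (-lam) (by nlinarith [hsign.2]) (by linarith)
          simpa using this
      _ = ‖(x + lam • y) M‖ := by
          simp [lp.coeFn_add, lp.coeFn_smul, Real.norm_eq_abs]
          rfl
      _ ≤ ‖x + lam • y‖ := lp.norm_apply_le_norm (by norm_num) _ M
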